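/- Let y ∈ ℝⁿ, X ∈ ℝ^{n×p}, λ > 0 and k ∈ {0,1,…,p}, and let U_k^λ = {Δ ∈ ℝ^{n×p} : Δ has at most k nonzero columns and ‖Δᵢ‖₂ ≤ λ for all i}. Then for every β ∈ ℝ^p, the minimum over Δ ∈ U_k^λ of ‖y − (X + Δ)β‖₂ is attained and equals max{0, ‖y − Xβ‖₂ − λ Σ_{i=1}^k |β_(i)|}. -/

import Mathlib

open Finset

/-- Absolute values of the entries of `β`, sorted in increasing order. -/
noncomputable def sortAbs {p : ℕ} (β : Fin p → ℝ) : Fin p → ℝ :=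
  fun i => |β (Tuple.sort (fun j => |β j|) i)|

/-- `∑_{i=1}^k |β_(i)|`: the sum of the `k` largest absolute values of entries of `β`. -/
noncomputable def topSum {p : ℕ} (k : ℕ) (β : Fin p → ℝ) : ℝ :=
  ∑ i ∈ Finset.univ.filter (fun i : Fin p => p - k ≤ (i : ℕ)), sortAbs β i

/-- The Euclidean norm of a vector. -/
noncomputable def norm2 {m : ℕ} (v : Fin m → ℝ) : ℝ := Real.sqrt (∑ i, v i ^ 2)

/-- The uncertainty set `U_k^λ`: matrices with at most `k` nonzero columns, each
column of Euclidean norm at most `λ`. -/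
noncomputable def kColBound {n p : ℕ} (k : ℕ) (lam : ℝ) : Set (Matrix (Fin n) (Fin p) ℝ) :=
  {Δ | (Finset.univ.filter (fun i : Fin p => ∃ j, Δ j i ≠ 0)).card ≤ k ∧
    ∀ i : Fin p, norm2 (fun j => Δ j i) ≤ lam}

/- ### Auxiliary lemmas about `norm2` -/

lemma norm2_eq {m : ℕ} (v : Fin m → ℝ) :
    norm2 v = ‖(WithLp.equiv 2 (Fin m → ℝ)).symm v‖ := by
  rw [EuclideanSpace.norm_eq, norm2]
  congr 1
  refine Finset.sum_congr rfl fun i _ => ?_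
  rw [Real.norm_eq_abs, sq_abs]
  rfl

lemma norm2_nonneg' {m : ℕ} (v : Fin m → ℝ) : 0 ≤ norm2 v := Real.sqrt_nonneg _

lemma norm2_smul {m : ℕ} (c : ℝ) (v : Fin m → ℝ) :
    norm2 (fun j => c * v j) = |c| * norm2 v := by
  rw [norm2_eq, norm2_eq v]
  have : (WithLp.equiv 2 (Fin m → ℝ)).symm (fun j => c * v j)
      = c • (WithLp.equiv 2 (Fin m → ℝ)).symm v := rfl
  rw [this, norm_smul, Real.norm_eq_abs]

lemma norm2_sub_ge {m : ℕ} (a b : Fin m → ℝ) :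
    norm2 a - norm2 b ≤ norm2 (a - b) := by
  rw [norm2_eq, norm2_eq, norm2_eq]
  have : (WithLp.equiv 2 (Fin m → ℝ)).symm (a - b)
      = (WithLp.equiv 2 (Fin m → ℝ)).symm a - (WithLp.equiv 2 (Fin m → ℝ)).symm b := rfl
  rw [this]
  exact norm_sub_norm_le _ _

lemma norm2_sum_le {m : ℕ} {ι : Type*} (s : Finset ι) (f : ι → Fin m → ℝ) :
    norm2 (fun j => ∑ i ∈ s, f i j) ≤ ∑ i ∈ s, norm2 (f i) := by
  have : (WithLp.equiv 2 (Fin m → ℝ)).symm (fun j => ∑ i ∈ s, f i j)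
      = ∑ i ∈ s, (WithLp.equiv 2 (Fin m → ℝ)).symm (f i) := by
    ext j
    simp
  rw [norm2_eq, this]
  calc ‖∑ i ∈ s, (WithLp.equiv 2 (Fin m → ℝ)).symm (f i)‖
      ≤ ∑ i ∈ s, ‖(WithLp.equiv 2 (Fin m → ℝ)).symm (f i)‖ := norm_sum_le _ _
    _ = ∑ i ∈ s, norm2 (f i) := by simp [norm2_eq]

lemma norm2_zero' {m : ℕ} : norm2 (fun _ : Fin m => (0 : ℝ)) = 0 := by
  simp [norm2]

lemma sortAbs_mono {p : ℕ} (β : Fin p → ℝ) : Monotone (sortAbs β) :=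
  Tuple.monotone_sort (fun j => |β j|)

lemma topSum_nonneg {p : ℕ} (k : ℕ) (β : Fin p → ℝ) : 0 ≤ topSum k β :=
  Finset.sum_nonneg fun i _ => abs_nonneg _

/- ### Combinatorial lemmas -/

lemma emb_le {c p : ℕ} (e : Fin c → Fin p) (he : StrictMono e) (m : Fin c) :
    (e m : ℕ) ≤ p - c + m := by
  have key : ∀ j : ℕ, ∀ h : (m : ℕ) + j < c, (e m : ℕ) + j ≤ e ⟨(m : ℕ) + j, h⟩ := by
    intro j
    induction j with
    | zero => intro h; simp
    | succ j ih =>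
      intro h
      have h' : (m : ℕ) + j < c := by omega
      have := ih h'
      have hlt : e ⟨(m : ℕ) + j, h'⟩ < e ⟨(m : ℕ) + (j+1), h⟩ := by
        apply he
        simp [Fin.lt_def]
      omega
  have hc : 0 < c := m.pos
  have h1 : (m : ℕ) + (c - 1 - (m : ℕ)) < c := by omega
  have := key (c - 1 - (m : ℕ)) h1
  have h2 : (e ⟨(m : ℕ) + (c - 1 - (m : ℕ)), h1⟩ : ℕ) < p := Fin.is_lt _
  omega

lemma sum_le_top {p k : ℕ} (hk : k ≤ p) (g : Fin p → ℝ) (hg : Monotone g)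
    (hg0 : ∀ i, 0 ≤ g i) (T : Finset (Fin p)) (hT : T.card ≤ k) :
    ∑ i ∈ T, g i ≤ ∑ i ∈ Finset.univ.filter (fun i : Fin p => p - k ≤ (i : ℕ)), g i := by
  classical
  set c := T.card with hc
  have hcp : c ≤ p := hT.trans hk
  set e : Fin c ↪o Fin p := T.orderEmbOfFin rfl with he
  have hTimg : T = Finset.image e Finset.univ := by
    apply Finset.coe_injective
    rw [Finset.coe_image, Finset.coe_univ, Set.image_univ, Finset.range_orderEmbOfFin]
  have hlt : ∀ m : Fin c, p - c + (m : ℕ) < p := fun m => by have := m.is_lt; omega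
  set f : Fin c → Fin p := fun m => ⟨p - c + (m : ℕ), hlt m⟩ with hf
  have hfinj : Function.Injective f := by
    intro a b hab
    have : p - c + (a : ℕ) = p - c + (b : ℕ) := congrArg Fin.val hab
    exact Fin.ext (by omega)
  calc ∑ i ∈ T, g i = ∑ m : Fin c, g (e m) := by
        rw [hTimg, Finset.sum_image (fun a _ b _ h => e.injective h)]
    _ ≤ ∑ m : Fin c, g (f m) := by
        refine Finset.sum_le_sum fun m _ => hg ?_
        simp only [Fin.le_def, hf]
        exact emb_le e e.strictMono m
    _ = ∑ i ∈ Finset.image f Finset.univ, g i := by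
        rw [Finset.sum_image (fun a _ b _ h => hfinj h)]
    _ ≤ ∑ i ∈ Finset.univ.filter (fun i : Fin p => p - k ≤ (i : ℕ)), g i := by
        refine Finset.sum_le_sum_of_subset_of_nonneg ?_ (fun i _ _ => hg0 i)
        intro i hi
        simp only [Finset.mem_image, Finset.mem_univ, true_and] at hi
        obtain ⟨m, rfl⟩ := hi
        simp only [Finset.mem_filter, Finset.mem_univ, true_and, hf]
        omega

lemma topK_card_le {p k : ℕ} :
    (Finset.univ.filter (fun i : Fin p => p - k ≤ (i : ℕ))).card ≤ k := by
  classical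
  have h : (Finset.univ.filter (fun i : Fin p => p - k ≤ (i : ℕ))).card ≤ (Finset.range k).card := by
    refine Finset.card_le_card_of_injOn (fun i => (i : ℕ) - (p - k))
      (fun i hi => ?_) (fun a ha b hb hab => ?_)
    · simp only [Finset.mem_coe, Finset.mem_filter, Finset.mem_univ, true_and] at hi
      have := i.is_lt
      simp only [Finset.mem_coe, Finset.mem_range]
      omega
    · simp only [Finset.mem_coe, Finset.mem_filter, Finset.mem_univ, true_and] at ha hb
      simp only at hab
      exact Fin.ext (by omega)
  simpa using h

/-- Any sum of `|β i|` over a set of at most `k` indices is at most `topSum k β`. -/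
lemma sum_abs_le_topSum {p k : ℕ} (hk : k ≤ p) (β : Fin p → ℝ) (S : Finset (Fin p))
    (hS : S.card ≤ k) : ∑ i ∈ S, |β i| ≤ topSum k β := by
  classical
  set σ := Tuple.sort (fun j => |β j|) with hσ
  have hsum : ∑ i ∈ S, |β i| = ∑ j ∈ S.image σ.symm, sortAbs β j := by
    rw [Finset.sum_image (fun a _ b _ h => σ.symm.injective h)]
    refine Finset.sum_congr rfl fun i _ => ?_
    simp [sortAbs, hσ]
  rw [hsum, topSum]
  exact sum_le_top hk (sortAbs β) (sortAbs_mono β) (fun i => abs_nonneg _) _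
    (le_trans (le_of_eq (Finset.card_image_of_injective _ σ.symm.injective)) hS)

/-- The top-k sum is attained on the image of the top-k index set under the sorting
permutation. -/
lemma sum_abs_topSet {p k : ℕ} (β : Fin p → ℝ) :
    ∑ i ∈ (Finset.univ.filter (fun i : Fin p => p - k ≤ (i : ℕ))).image
        (Tuple.sort (fun j => |β j|)), |β i| = topSum k β := by
  classical
  rw [Finset.sum_image (fun a _ b _ h => (Tuple.sort (fun j => |β j|)).injective h)]
  rfl

lemma real_sign_mul_self (x : ℝ) : Real.sign x * x = |x| := by
  rcases lt_trichotomy x 0 with h | h | h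
  · rw [Real.sign_of_neg h, abs_of_neg h]; ring
  · simp [h]
  · rw [Real.sign_of_pos h, abs_of_pos h]; ring

lemma abs_real_sign_le (x : ℝ) : |Real.sign x| ≤ 1 := by
  rcases Real.sign_apply_eq x with h | h | h <;> rw [h] <;> norm_num

/-- for every `β`, the minimum over `Δ ∈ U_k^λ` of
`‖y - (X+Δ)β‖₂` is attained and equals
`max{0, ‖y - Xβ‖₂ - λ ∑_{i=1}^k |β_(i)|}`. -/
theorem minmin_robust_value {n p : ℕ} (y : Fin n → ℝ) (X : Matrix (Fin n) (Fin p) ℝ)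
    (lam : ℝ) (hlam : 0 < lam) (k : ℕ) (hk : k ≤ p) (β : Fin p → ℝ) :
    IsLeast {v : ℝ | ∃ Δ ∈ kColBound (n := n) (p := p) k lam,
        v = norm2 (y - (X + Δ).mulVec β)}
      (max 0 (norm2 (y - X.mulVec β) - lam * topSum k β)) := by
  classical
  set r : Fin n → ℝ := y - X.mulVec β with hr
  set R : ℝ := norm2 r with hR
  set t : ℝ := lam * topSum k β with ht
  have hR0 : 0 ≤ R := norm2_nonneg' r
  have ht0 : 0 ≤ t := mul_nonneg hlam.le (topSum_nonneg k β)
  have hresid : ∀ Δ : Matrix (Fin n) (Fin p) ℝ,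
      y - (X + Δ).mulVec β = r - Δ.mulVec β := by
    intro Δ
    funext j
    simp [hr, Matrix.add_mulVec, Pi.sub_apply]
    ring
  constructor
  · -- membership : construct the optimal Δ
    by_cases hRz : R = 0
    · refine ⟨0, ⟨?_, ?_⟩, ?_⟩
      · simp
      · intro i
        have h00 : (fun j => (0 : Matrix (Fin n) (Fin p) ℝ) j i) = fun _ : Fin n => (0:ℝ) := rfl
        rw [h00, norm2_zero']
        exact hlam.le
      · have h0 : (Matrix.mulVec (0 : Matrix (Fin n) (Fin p) ℝ) β) = 0 := by
          funext j; simp [Matrix.mulVec]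
        rw [hresid 0, h0, sub_zero]
        have hle : R - t ≤ 0 := by rw [hRz]; linarith
        rw [max_eq_left hle]
        exact hRz.symm
    · -- R > 0 : explicit construction
      have hRpos : 0 < R := lt_of_le_of_ne hR0 (Ne.symm hRz)
      set σ := Tuple.sort (fun j => |β j|) with hσ
      set S : Finset (Fin p) :=
        (Finset.univ.filter (fun i : Fin p => p - k ≤ (i : ℕ))).image σ with hS
      have hScard : S.card ≤ k := le_trans Finset.card_image_le topK_card_le
      have hSsum : ∑ i ∈ S, |β i| = topSum k β := sum_abs_topSet β
      set s : ℝ := min 1 (R / t) with hs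
      have hs0 : 0 ≤ s := le_min zero_le_one (div_nonneg hR0 ht0)
      have hs1 : s ≤ 1 := min_le_left _ _
      have hst : s * t = min t R := by
        rcases eq_or_lt_of_le ht0 with h | h
        · rw [← h, mul_zero]
          exact (min_eq_left hR0).symm
        · rw [hs, min_mul_of_nonneg _ _ h.le, one_mul, div_mul_cancel₀ _ (ne_of_gt h)]
      set Δ : Matrix (Fin n) (Fin p) ℝ :=
        Matrix.of (fun j i => if i ∈ S then (s * lam * Real.sign (β i)) * (r j / R) else 0)
        with hΔ
      have hΔapp : ∀ j i, Δ j i = if i ∈ S then (s * lam * Real.sign (β i)) * (r j / R) else 0 :=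
        fun j i => rfl
      refine ⟨Δ, ⟨?_, ?_⟩, ?_⟩
      · refine le_trans (Finset.card_le_card ?_) hScard
        intro i hi
        simp only [Finset.mem_filter, Finset.mem_univ, true_and] at hi
        obtain ⟨j, hj⟩ := hi
        by_contra hiS
        exact hj (by rw [hΔapp, if_neg hiS])
      · intro i
        by_cases hiS : i ∈ S
        · have hcoleq : (fun j => Δ j i)
              = fun j => (s * lam * Real.sign (β i) / R) * r j := by
            funext j
            rw [hΔapp, if_pos hiS]
            ring
          rw [hcoleq, norm2_smul]
          have habs : |s * lam * Real.sign (β i) / R| = s * lam * |Real.sign (β i)| / R := by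
            rw [abs_div, abs_mul, abs_mul, abs_of_nonneg hs0, abs_of_pos hlam,
              abs_of_pos hRpos]
          rw [habs, div_mul_cancel₀ _ (ne_of_gt hRpos)]
          nlinarith [mul_le_mul_of_nonneg_left (abs_real_sign_le (β i)) (mul_nonneg hs0 hlam.le),
            mul_le_mul_of_nonneg_right hs1 hlam.le, abs_nonneg (Real.sign (β i))]
        · have hcoleq : (fun j => Δ j i) = fun _ => (0 : ℝ) := by
            funext j
            rw [hΔapp, if_neg hiS]
          rw [hcoleq]
          rw [norm2_zero']
          exact hlam.le
      · rw [hresid Δ]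
        have hmv : Δ.mulVec β = fun j => (s * t / R) * r j := by
          funext j
          rw [Matrix.mulVec, dotProduct]
          have : ∀ i : Fin p, Δ j i * β i
              = if i ∈ S then (s * lam * (r j / R)) * (Real.sign (β i) * β i) else 0 := by
            intro i
            rw [hΔapp]
            by_cases hiS : i ∈ S
            · rw [if_pos hiS, if_pos hiS]; ring
            · rw [if_neg hiS, if_neg hiS, zero_mul]
          rw [Finset.sum_congr rfl (fun i _ => this i)]
          rw [Finset.sum_ite_mem, Finset.univ_inter, ← Finset.mul_sum]
          have : ∑ i ∈ S, Real.sign (β i) * β i = topSum k β := by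
            rw [← hSsum]
            exact Finset.sum_congr rfl fun i _ => real_sign_mul_self (β i)
          rw [this, ht]
          ring
        rw [hmv]
        have hsub : (r - fun j => (s * t / R) * r j) = fun j => (1 - s * t / R) * r j := by
          funext j
          simp only [Pi.sub_apply]
          ring
        rw [hsub, norm2_smul, ← hR]
        have hstR : s * t ≤ R := by rw [hst]; exact min_le_right _ _
        have h1 : 0 ≤ 1 - s * t / R := by
          rw [sub_nonneg, div_le_one hRpos]
          exact hstR
        rw [abs_of_nonneg h1]
        have : (1 - s * t / R) * R = R - s * t := by
          field_simp
        rw [this, hst]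
        rcases le_total t R with h | h
        · rw [min_eq_left h, max_eq_right (by linarith)]
        · rw [min_eq_right h, max_eq_left (by linarith), sub_self]
  · -- lower bound
    rintro v ⟨Δ, ⟨hcard, hcol⟩, rfl⟩
    rw [hresid Δ]
    refine max_le (norm2_nonneg' _) ?_
    have hbound : norm2 (Δ.mulVec β) ≤ t := by
      set supp := Finset.univ.filter (fun i : Fin p => ∃ j, Δ j i ≠ 0) with hsupp
      have hmv : Δ.mulVec β = fun j => ∑ i ∈ supp, β i * Δ j i := by
        funext j
        rw [Matrix.mulVec, dotProduct]
        rw [← Finset.sum_filter_add_sum_filter_not Finset.univ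
          (fun i : Fin p => ∃ j, Δ j i ≠ 0) (fun i => Δ j i * β i)]
        have hz : ∑ i ∈ Finset.univ.filter (fun i : Fin p => ¬ ∃ j, Δ j i ≠ 0),
            Δ j i * β i = 0 := by
          refine Finset.sum_eq_zero fun i hi => ?_
          simp only [Finset.mem_filter, Finset.mem_univ, true_and, not_exists, not_not] at hi
          rw [hi j, zero_mul]
        rw [hz, add_zero]
        exact Finset.sum_congr rfl fun i _ => mul_comm _ _
      rw [hmv]
      calc norm2 (fun j => ∑ i ∈ supp, β i * Δ j i)
          ≤ ∑ i ∈ supp, norm2 (fun j => β i * Δ j i) := norm2_sum_le _ _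
        _ = ∑ i ∈ supp, |β i| * norm2 (fun j => Δ j i) := by
            exact Finset.sum_congr rfl fun i _ => norm2_smul _ _
        _ ≤ ∑ i ∈ supp, |β i| * lam := by
            refine Finset.sum_le_sum fun i _ => ?_
            exact mul_le_mul_of_nonneg_left (hcol i) (abs_nonneg _)
        _ = lam * ∑ i ∈ supp, |β i| := by rw [← Finset.sum_mul]; ring
        _ ≤ lam * topSum k β :=
            mul_le_mul_of_nonneg_left (sum_abs_le_topSum hk β supp hcard) hlam.le
    have := norm2_sub_ge r (Δ.mulVec β)
    have : R - t ≤ norm2 (r - Δ.mulVec β) := by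
      have h2 := norm2_sub_ge r (Δ.mulVec β)
      linarith
    linarith
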